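/- Radix sort is stable and correct: sorting a list of natural numbers less than 2^64 by performing eight successive stable sorts keyed on the k-th byte (k = 0,...,7, least significant first) produces the list sorted in nondecreasing order. -/

import Mathlib

/-- The `k`-th byte (least significant first) of a natural number. -/
def byteKey (k n : ℕ) : ℕ := n / 256 ^ k % 256

/-- Stable sort of a list by a natural-number key (merge sort is stable). -/
def stableSortBy (f : ℕ → ℕ) (l : List ℕ) : List ℕ :=
  l.mergeSort (fun a b => decide (f a ≤ f b))

theorem radix_step (k : ℕ) (l : List ℕ)
    (h : l.Pairwise (fun a b => a % 256 ^ k ≤ b % 256 ^ k)) :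
    (stableSortBy (byteKey k) l).Pairwise
      (fun a b => a % 256 ^ (k + 1) ≤ b % 256 ^ (k + 1)) := by
  have trans : ∀ a b c : ℕ, decide (byteKey k a ≤ byteKey k b) →
      decide (byteKey k b ≤ byteKey k c) → decide (byteKey k a ≤ byteKey k c) := by
    simp only [decide_eq_true_eq]; omega
  have total : ∀ a b : ℕ,
      (decide (byteKey k a ≤ byteKey k b) || decide (byteKey k b ≤ byteKey k a)) := by
    simp only [Bool.or_eq_true, decide_eq_true_eq]; omega
  rw [stableSortBy, ← List.mergeSort_zipIdx, List.pairwise_map]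
  have s := List.pairwise_mergeSort (List.zipIdxLE_trans trans) (List.zipIdxLE_total total) l.zipIdx
  refine s.imp_of_mem ?_
  rintro ⟨a, i⟩ ⟨b, j⟩ ha hb hle
  simp only [List.mem_mergeSort, List.mem_zipIdx_iff_getElem?] at ha hb
  have hpos : 0 < 256 ^ k := Nat.pow_pos (by norm_num)
  have hma : a % 256 ^ k < 256 ^ k := Nat.mod_lt _ hpos
  have hmb : b % 256 ^ k < 256 ^ k := Nat.mod_lt _ hpos
  have hdecomp : ∀ n : ℕ, n % 256 ^ (k + 1) = n % 256 ^ k + 256 ^ k * (n / 256 ^ k % 256) := by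
    intro n
    rw [pow_succ, Nat.mod_mul]
  simp only [List.zipIdxLE, byteKey] at hle
  by_cases hab : a / 256 ^ k % 256 ≤ b / 256 ^ k % 256
  · rcases Nat.lt_or_ge (a / 256 ^ k % 256) (b / 256 ^ k % 256) with hlt | hge
    · rw [hdecomp a, hdecomp b]
      have := Nat.mul_le_mul_left (256 ^ k) (Nat.succ_le_of_lt hlt)
      rw [Nat.mul_succ] at this
      omega
    · -- equal byte keys; use index order and stability
      have heq : a / 256 ^ k % 256 = b / 256 ^ k % 256 := le_antisymm hab hge
      have hij : i ≤ j := by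
        simp only [hab, hge, if_true, decide_eq_true_eq] at hle
        exact hle
      rcases Nat.lt_or_ge i j with hij' | hij'
      · have hi : i < l.length := by
          by_contra hc
          rw [List.getElem?_eq_none (Nat.le_of_not_lt hc)] at ha
          cases ha
        have hj : j < l.length := by
          by_contra hc
          rw [List.getElem?_eq_none (Nat.le_of_not_lt hc)] at hb
          cases hb
        have ha' : l[i] = a := by
          rw [List.getElem?_eq_getElem hi] at ha; exact Option.some.inj ha
        have hb' : l[j] = b := by
          rw [List.getElem?_eq_getElem hj] at hb; exact Option.some.inj hb
        have := (List.pairwise_iff_getElem.mp h) i j hi hj hij'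
        rw [ha', hb'] at this
        rw [hdecomp a, hdecomp b, heq]
        omega
      · have : i = j := le_antisymm hij hij'
        subst this
        rw [ha] at hb
        have : a = b := Option.some.inj hb
        subst this
        exact le_refl _
  · simp only [hab, if_false] at hle
    exact absurd hle (by simp)

/-- Radix sort correctness: for a list of naturals `< 2^64`, performing eight
successive stable sorts keyed on bytes `0,…,7` (least significant first)
yields a permutation of the list sorted in nondecreasing order. -/
theorem stmt9 (l : List ℕ) (hl : ∀ n ∈ l, n < 2 ^ 64) :
    let result := (List.range 8).foldl
      (fun acc k => stableSortBy (byteKey k) acc) l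
    result.Pairwise (· ≤ ·) ∧ result.Perm l := by
  intro result
  have key : ∀ m : ℕ,
      ((List.range m).foldl (fun acc k => stableSortBy (byteKey k) acc) l).Perm l ∧
      ((List.range m).foldl (fun acc k => stableSortBy (byteKey k) acc) l).Pairwise
        (fun a b => a % 256 ^ m ≤ b % 256 ^ m) := by
    intro m
    induction m with
    | zero =>
      simp only [List.range_zero, List.foldl_nil]
      exact ⟨List.Perm.refl l, List.pairwise_iff_forall_sublist.mpr (fun _ => by simp [Nat.mod_one])⟩
    | succ n ih =>
      rw [List.range_succ, List.foldl_append, List.foldl_cons, List.foldl_nil]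
      obtain ⟨hperm, hpair⟩ := ih
      constructor
      · exact (List.mergeSort_perm _ _).trans hperm
      · exact radix_step n _ hpair
  obtain ⟨hperm, hpair⟩ := key 8
  refine ⟨?_, hperm⟩
  have h256 : (256 : ℕ) ^ 8 = 2 ^ 64 := by norm_num
  refine hpair.imp_of_mem ?_
  intro a b ha hb hab
  have ha' : a < 2 ^ 64 := hl a (hperm.mem_iff.mp ha)
  have hb' : b < 2 ^ 64 := hl b (hperm.mem_iff.mp hb)
  rwa [h256, Nat.mod_eq_of_lt ha', Nat.mod_eq_of_lt hb'] at hab
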